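/- Let p ∈ K[X] with p(0) ≠ 1. Consider on K[X] × K[X] the operators Ẽ(f,g) = (X·f + g, X·g), H̃(f,g) = ((p+1)·f + 2X·f', (p−1)·g + 2X·g'), Ỹ(f,g) = (q_p·f − p·f' − X·f'', q_p·g − p·g' − X·g'' + f), which realize the tensor product module V(p) ⊗ L(1) of V(p) with the 2-dimensional natural sl₂(K)-module L(1). Then there exists a K-linear bijection Φ : K[X] × K[X] → K[X] × K[X] intertwining this action with the direct sum of the V(p−1)-action and the V(p+1)-action (componentwise E_{p−1} ⊕ E_{p+1}, H_{p−1} ⊕ H_{p+1}, Y_{p−1} ⊕ Y_{p+1}). Hence V(p) ⊗ L(1) ≅ V(p−1) ⊕ V(p+1) as sl₂(K)-modules. -/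
import Mathlib


open Polynomial

private noncomputable def phiAux (K : Type*) [Field K] (cK : K) (U : K[X]) :
    (K[X] × K[X]) →ₗ[K] (K[X] × K[X]) where
  toFun v := ((2 * C cK - 2) * v.2 - X * (2 * v.1 - U * v.2 - 2 * derivative v.2),
      2 * v.1 - U * v.2 - 2 * derivative v.2)
  map_add' a b := by
    simp only [Prod.fst_add, Prod.snd_add, derivative_add, Prod.mk_add_mk, Prod.mk.injEq]
    constructor <;> ring
  map_smul' m a := by
    simp only [Prod.smul_fst, Prod.smul_snd, derivative_smul, RingHom.id_apply, Prod.smul_mk,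
      smul_eq_C_mul, derivative_C_mul, Prod.mk.injEq]
    constructor <;> ring

private lemma phiAux_apply (K : Type*) [Field K] (cK : K) (U : K[X]) (v : K[X] × K[X]) :
    phiAux K cK U v = ((2 * C cK - 2) * v.2 - X * (2 * v.1 - U * v.2 - 2 * derivative v.2),
      2 * v.1 - U * v.2 - 2 * derivative v.2) := rfl

private noncomputable def psiAux (K : Type*) [Field K] (k1 k2 : K) (U : K[X]) :
    (K[X] × K[X]) →ₗ[K] (K[X] × K[X]) where
  toFun v := (C k2 * (v.2 + U * (C k1 * (v.1 + X * v.2)))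
      + C k1 * (derivative v.1 + v.2 + X * derivative v.2), C k1 * (v.1 + X * v.2))
  map_add' a b := by
    simp only [Prod.fst_add, Prod.snd_add, derivative_add, Prod.mk_add_mk, Prod.mk.injEq]
    constructor <;> ring
  map_smul' m a := by
    simp only [Prod.smul_fst, Prod.smul_snd, derivative_smul, RingHom.id_apply, Prod.smul_mk,
      smul_eq_C_mul, derivative_C_mul, Prod.mk.injEq]
    constructor <;> ring

private lemma psiAux_apply (K : Type*) [Field K] (k1 k2 : K) (U : K[X]) (v : K[X] × K[X]) :
    psiAux K k1 k2 U v = (C k2 * (v.2 + U * (C k1 * (v.1 + X * v.2)))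
      + C k1 * (derivative v.1 + v.2 + X * derivative v.2), C k1 * (v.1 + X * v.2)) := rfl

/-- For `p(0) ≠ 1`, the module `V(p) ⊗ L(1)`, realized on
`K[X] × K[X]` via `Ẽ(f,g) = (Xf + g, Xg)`, `H̃(f,g) = ((p+1)f + 2Xf', (p-1)g + 2Xg')`,
`Ỹ(f,g) = (q f - p f' - X f'', q g - p g' - X g'' + f)`, is isomorphic to
`V(p-1) ⊕ V(p+1)`: there is a linear bijection intertwining the above action with
the componentwise `V(p-1)`- and `V(p+1)`-actions. -/
theorem stmt7 (K : Type*) [Field K] [IsAlgClosed K] [CharZero K]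
    (p q qm qpl : K[X])
    (hq : 2 * q + 2 * X * derivative q + p * derivative p
        + X * derivative (derivative p) = 0)
    (hqm : 2 * qm + 2 * X * derivative qm + (p - 1) * derivative (p - 1)
        + X * derivative (derivative (p - 1)) = 0)
    (hqpl : 2 * qpl + 2 * X * derivative qpl + (p + 1) * derivative (p + 1)
        + X * derivative (derivative (p + 1)) = 0)
    (hp0 : p.coeff 0 ≠ 1) :
    ∃ Φ : (K[X] × K[X]) ≃ₗ[K] (K[X] × K[X]),
      (∀ f g : K[X],
        Φ (X * f + g, X * g) = (X * (Φ (f, g)).1, X * (Φ (f, g)).2)) ∧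
      (∀ f g : K[X],
        Φ ((p + 1) * f + 2 * X * derivative f, (p - 1) * g + 2 * X * derivative g)
          = ((p - 1) * (Φ (f, g)).1 + 2 * X * derivative (Φ (f, g)).1,
             (p + 1) * (Φ (f, g)).2 + 2 * X * derivative (Φ (f, g)).2)) ∧
      (∀ f g : K[X],
        Φ (q * f - p * derivative f - X * derivative (derivative f),
           q * g - p * derivative g - X * derivative (derivative g) + f)
          = (qm * (Φ (f, g)).1 - (p - 1) * derivative (Φ (f, g)).1
               - X * derivative (derivative (Φ (f, g)).1),
             qpl * (Φ (f, g)).2 - (p + 1) * derivative (Φ (f, g)).2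
               - X * derivative (derivative (Φ (f, g)).2))) := by
  simp only [derivative_sub, derivative_add, derivative_one, sub_zero, add_zero] at hqm hqpl
  set c : K := p.coeff 0 with hc
  set U : K[X] := qm - qpl with hU
  have hconst : ∀ w : K[X], derivative w = 0 → w = C (w.coeff 0) := fun w h =>
    Polynomial.eq_C_of_natDegree_eq_zero (Polynomial.natDegree_eq_zero_of_derivative_eq_zero h)
  have h2 : (2 : K[X]) ≠ 0 := by norm_num
  have h4 : (4 : K[X]) ≠ 0 := by norm_num
  have hu : X * U = p - C c := by
    have hd : derivative (X * U - p) = 0 := by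
      have h1 : (2 : K[X]) * derivative (X * U - p) = 0 := by
        simp only [hU, derivative_sub, derivative_mul, derivative_X, one_mul]
        linear_combination hqm - hqpl
      exact (mul_eq_zero.mp h1).resolve_left h2
    have hcc := hconst _ hd
    have hco : (X * U - p).coeff 0 = -c := by
      simp [coeff_sub, mul_coeff_zero, hc]
    rw [hco, map_neg] at hcc
    linear_combination hcc
  have hp' : p = X * U + C c := by linear_combination -hu
  rw [hp'] at hq hqm hqpl
  simp only [derivative_add, derivative_mul, derivative_X, derivative_C, one_mul, add_zero,
    mul_zero, zero_add, zero_mul] at hq hqm hqpl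
  have key : ∀ w : K[X], derivative (X * w) = 0 → w = 0 := by
    intro w hd
    have hcc := hconst _ hd
    have hco : (X * w).coeff 0 = 0 := by simp [mul_coeff_zero]
    rw [hco, map_zero] at hcc
    exact (mul_eq_zero.mp hcc).resolve_left X_ne_zero
  have h4q : 4 * q = -(X * U ^ 2) - 2 * C c * U - 2 * X * derivative U := by
    have hw := key (4 * q + X * U ^ 2 + 2 * C c * U + 2 * X * derivative U) ?_
    · linear_combination hw
    · simp only [derivative_mul, derivative_add, derivative_X, derivative_C, derivative_pow,
        derivative_ofNat, one_mul, mul_one, zero_mul, zero_add, add_zero, mul_zero,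
        Nat.cast_ofNat, map_ofNat, pow_one]
      linear_combination 2 * hq
  have h4qm : 4 * qm = -(X * U ^ 2) - 2 * C c * U - 2 * X * derivative U + 2 * U := by
    have hw := key (4 * qm + X * U ^ 2 + 2 * C c * U + 2 * X * derivative U - 2 * U) ?_
    · linear_combination hw
    · simp only [derivative_mul, derivative_add, derivative_sub, derivative_X, derivative_C,
        derivative_pow, derivative_ofNat, one_mul, mul_one, zero_mul, zero_add, add_zero,
        mul_zero, Nat.cast_ofNat, map_ofNat, pow_one]
      linear_combination 2 * hqm
  have h4qpl : 4 * qpl = -(X * U ^ 2) - 2 * C c * U - 2 * X * derivative U - 2 * U := by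
    have hw := key (4 * qpl + X * U ^ 2 + 2 * C c * U + 2 * X * derivative U + 2 * U) ?_
    · linear_combination hw
    · simp only [derivative_mul, derivative_add, derivative_sub, derivative_X, derivative_C,
        derivative_pow, derivative_ofNat, one_mul, mul_one, zero_mul, zero_add, add_zero,
        mul_zero, Nat.cast_ofNat, map_ofNat, pow_one]
      linear_combination 2 * hqpl
  have h4q' : 4 * derivative q = -(U ^ 2) - 2 * X * U * derivative U - 2 * C c * derivative U
      - 2 * derivative U - 2 * X * derivative (derivative U) := by
    have h := congrArg derivative h4q
    simp only [derivative_mul, derivative_add, derivative_sub, derivative_neg, derivative_X,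
      derivative_C, derivative_pow, derivative_ofNat, one_mul, mul_one, zero_mul, zero_add,
      add_zero, mul_zero, Nat.cast_ofNat, map_ofNat, pow_one] at h
    linear_combination h
  have hcne : (2 * c - 2 : K) ≠ 0 := by
    have hc1 : c - 1 ≠ 0 := sub_ne_zero.mpr hp0
    intro h
    exact hc1 (by linear_combination (2 : K)⁻¹ * h)
  have hk1 : (C ((2 * c - 2)⁻¹) : K[X]) * (2 * C c - 2) = 1 := by
    have hM : (2 * C c - 2 : K[X]) = C (2 * c - 2) := by
      rw [C_sub, C_mul, map_ofNat]
    rw [hM, ← C_mul, inv_mul_cancel₀ hcne, C_1]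
  have hk2 : (C ((2 : K)⁻¹) : K[X]) * 2 = 1 := by
    rw [show (2 : K[X]) = C 2 from (map_ofNat C 2).symm, ← C_mul,
      inv_mul_cancel₀ two_ne_zero, C_1]
  refine ⟨LinearEquiv.ofLinear (phiAux K c U) (psiAux K ((2 * c - 2)⁻¹) ((2 : K)⁻¹) U) ?_ ?_,
    ?_, ?_, ?_⟩
  · -- Φ ∘ Ψ = id
    apply LinearMap.ext
    rintro ⟨a, b⟩
    simp only [LinearMap.comp_apply, LinearMap.id_apply, phiAux_apply, psiAux_apply,
      derivative_mul, derivative_add, derivative_C, derivative_X, zero_mul, zero_add, one_mul,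
      Prod.mk.injEq]
    constructor
    · linear_combination (a + X * b) * hk1
        - (X * (b + U * (C ((2 * c - 2)⁻¹) * (a + X * b)))) * hk2
    · linear_combination (b + U * (C ((2 * c - 2)⁻¹) * (a + X * b))) * hk2
  · -- Ψ ∘ Φ = id
    apply LinearMap.ext
    rintro ⟨f, g⟩
    simp only [LinearMap.comp_apply, LinearMap.id_apply, phiAux_apply, psiAux_apply,
      derivative_mul, derivative_add, derivative_sub, derivative_C, derivative_X,
      derivative_ofNat, zero_mul, zero_add, one_mul, mul_zero, add_zero, Prod.mk.injEq]
    constructor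
    · linear_combination (f - derivative g) * hk2
        + (C ((2 : K)⁻¹) * U * g + derivative g) * hk1
    · linear_combination g * hk1
  · -- E identity
    intro f g
    simp only [LinearEquiv.ofLinear_apply, phiAux_apply, derivative_mul, derivative_add,
      derivative_X, one_mul, Prod.mk.injEq]
    constructor <;> ring
  · -- H identity
    intro f g
    rw [hp']
    simp only [LinearEquiv.ofLinear_apply, phiAux_apply, derivative_mul, derivative_add,
      derivative_sub, derivative_one, derivative_X, derivative_C, derivative_ofNat, one_mul,
      zero_mul, zero_add, add_zero, mul_zero, Prod.mk.injEq]
    constructor <;> ring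
  · -- Y identity
    intro f g
    rw [hp']
    simp only [LinearEquiv.ofLinear_apply, phiAux_apply, derivative_mul, derivative_add,
      derivative_sub, derivative_neg, derivative_one, derivative_X, derivative_C,
      derivative_ofNat, one_mul, zero_mul, zero_add, add_zero, mul_zero, Prod.mk.injEq]
    constructor
    · apply mul_left_cancel₀ h4
      linear_combination ((2 * C c - 2) * g - 2 * X * f + X * U * g + 2 * X * derivative g) * h4q
        + (2 * X * g) * h4q'
        - ((2 * C c - 2) * g - X * (2 * f - U * g - 2 * derivative g)) * h4qm
    · apply mul_left_cancel₀ h4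
      linear_combination (2 * f - U * g - 2 * derivative g) * (h4q - h4qpl) - (2 * g) * h4q'
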